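/- Suppose there exists a set of positive P-measure on which p(r) > n(r). Then for every Q̂ ∈ (0,1), the optimal superlevel set D_+ with Q(D_+) = Q̂ satisfies P(D_+) - N(D_+) > 0. -/

import Mathlib

open MeasureTheory
open scoped ENNReal NNReal

lemma my_aux (g : ℝ → ℝ) (hg : Measurable g) (hg0 : ∀ r, 0 ≤ g r)
    (μ : Measure ℝ) (hμ : μ = volume.withDensity (fun r => ENNReal.ofReal (g r)))
    [IsProbabilityMeasure μ] :
    Integrable g volume ∧ ∀ A : Set ℝ, MeasurableSet A → (μ A).toReal = ∫ r in A, g r := by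
  have h1 : μ Set.univ = 1 := measure_univ
  rw [hμ, withDensity_apply _ MeasurableSet.univ, Measure.restrict_univ] at h1
  have hfin : ∫⁻ r, ENNReal.ofReal (g r) < ⊤ := by rw [h1]; exact ENNReal.one_lt_top
  have hint : Integrable g volume := by
    refine ⟨hg.aestronglyMeasurable, ?_⟩
    have he : ∀ r, (‖g r‖₊ : ℝ≥0∞) = ENNReal.ofReal (g r) := fun r =>
      Real.enorm_eq_ofReal (hg0 r)
    show (∫⁻ a, (‖g a‖₊ : ℝ≥0∞)) < ⊤
    simp_rw [he]; exact hfin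
  refine ⟨hint, fun A hA => ?_⟩
  rw [hμ, withDensity_apply _ hA,
    integral_eq_lintegral_of_nonneg_ae (ae_of_all _ hg0) hg.aestronglyMeasurable.restrict]

lemma my_pos (f : ℝ → ℝ) (hf : Integrable f volume) (A B : Set ℝ)
    (hA : MeasurableSet A) (hB : MeasurableSet B) (hBA : B ⊆ A)
    (h0 : ∀ r ∈ A, 0 ≤ f r) (h1 : ∀ r ∈ B, 0 < f r) (hvol : 0 < volume B) :
    0 < ∫ r in A, f r := by
  have hae : 0 ≤ᵐ[volume.restrict B] f :=
    ae_restrict_of_forall_mem hB (fun r hr => (h1 r hr).le)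
  have hBpos : 0 < ∫ r in B, f r := by
    rw [setIntegral_pos_iff_support_of_nonneg_ae hae hf.integrableOn]
    exact lt_of_lt_of_le hvol (measure_mono (fun r hr => ⟨(h1 r hr).ne', hr⟩))
  have hmono : ∫ r in B, f r ≤ ∫ r in A, f r :=
    setIntegral_mono_set hf.integrableOn (ae_restrict_of_forall_mem hA h0)
      (HasSubset.Subset.eventuallyLE hBA)
  linarith

lemma my_zero (g : ℝ → ℝ) (A : Set ℝ) (hA : MeasurableSet A)
    (h : ∀ᵐ r ∂(volume : Measure ℝ), r ∈ A → g r ≤ 0) :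
    volume.withDensity (fun r => ENNReal.ofReal (g r)) A = 0 := by
  rw [withDensity_apply _ hA]
  have he : ∫⁻ r in A, ENNReal.ofReal (g r) = ∫⁻ r in A, 0 := by
    apply setLIntegral_congr_fun_ae hA
    filter_upwards [h] with r hr hrA
    simp [ENNReal.ofReal_eq_zero.mpr (hr hrA)]
  simp [he]


/-- If {r : p(r) > n(r)} has positive P-measure, then for every
Q̂ ∈ (0,1) the bathtub-optimal set D_+ = {r : q(p(r)-n(r)) > Δ₊·n(r)} ∪ S_+
with Q(D_+) = Q̂ satisfies P(D_+) - N(D_+) > 0. -/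
theorem stmt_9
    (p n : ℝ → ℝ) (hp : Measurable p) (hn : Measurable n)
    (hp0 : ∀ r, 0 ≤ p r) (hn0 : ∀ r, 0 ≤ n r)
    (P N Q : Measure ℝ)
    (hP : P = volume.withDensity (fun r => ENNReal.ofReal (p r)))
    (hN : N = volume.withDensity (fun r => ENNReal.ofReal (n r)))
    [IsProbabilityMeasure P] [IsProbabilityMeasure N] [IsProbabilityMeasure Q]
    (q : ℝ) (hq0 : 0 < q) (hq1 : q < 1)
    (hQ : ∀ A : Set ℝ, MeasurableSet A →
      (Q A).toReal = q * (P A).toReal + (1 - q) * (N A).toReal)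
    -- assumption (ii): the test can distinguish the populations
    (hdist : 0 < P {r | n r < p r})
    (Qhat : ℝ) (hQhat : Qhat ∈ Set.Ioo (0 : ℝ) 1)
    -- the bathtub-optimal set D_+ at level Δ₊ ≥ -q with boundary portion S_+
    (Δp : ℝ) (hΔp : -q ≤ Δp)
    (Splus : Set ℝ) (hSmeas : MeasurableSet Splus)
    (hS : Splus ⊆ {r | q * (p r - n r) = Δp * n r})
    (Dplus : Set ℝ)
    (hDplus : Dplus = {r | q * (p r - n r) > Δp * n r} ∪ Splus)
    (hQDp : (Q Dplus).toReal = Qhat) :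
    0 < (P Dplus).toReal - (N Dplus).toReal := by
  obtain ⟨hPint, hPA⟩ := my_aux p hp hp0 P hP
  obtain ⟨hNint, hNA⟩ := my_aux n hn hn0 N hN
  have hOmeas : MeasurableSet {r | q * (p r - n r) > Δp * n r} :=
    measurableSet_lt (measurable_const.mul hn) (measurable_const.mul (hp.sub hn))
  have hMD : MeasurableSet Dplus := hDplus ▸ hOmeas.union hSmeas
  have hfint : Integrable (fun r => p r - n r) volume := hPint.sub hNint
  have hgoal : (P Dplus).toReal - (N Dplus).toReal = ∫ r in Dplus, (p r - n r) := by
    rw [hPA Dplus hMD, hNA Dplus hMD,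
      integral_sub hPint.integrableOn hNint.integrableOn]
  rw [hgoal]
  rcases le_or_gt 0 Δp with hΔ0 | hΔ0
  · -- case 0 ≤ Δp : integrand nonneg on Dplus
    have hnonneg : ∀ r ∈ Dplus, 0 ≤ p r - n r := by
      intro r hr
      rw [hDplus] at hr
      rcases hr with hr | hr
      · have h1 : 0 ≤ Δp * n r := mul_nonneg hΔ0 (hn0 r)
        simp only [Set.mem_setOf_eq] at hr
        nlinarith
      · have h2 := hS hr
        simp only [Set.mem_setOf_eq] at h2
        nlinarith [mul_nonneg hΔ0 (hn0 r)]
    rcases hΔ0.eq_or_lt with hΔe | hΔpos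
    · -- Δp = 0 : use B = {n < p}
      have hBmeas : MeasurableSet {r | n r < p r} := measurableSet_lt hn hp
      have hBD : {r | n r < p r} ⊆ Dplus := by
        intro r hr
        simp only [Set.mem_setOf_eq] at hr
        rw [hDplus]
        left
        simp only [Set.mem_setOf_eq, gt_iff_lt, ← hΔe, zero_mul]
        exact mul_pos hq0 (by linarith)
      have hvol : 0 < volume {r | n r < p r} := by
        by_contra h
        push_neg at h
        have h0 : volume {r | n r < p r} = 0 := le_antisymm h zero_le
        have : P {r | n r < p r} = 0 := by
          rw [hP]; exact (withDensity_absolutelyContinuous volume _) h0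
        rw [this] at hdist; exact lt_irrefl _ hdist
      exact my_pos _ hfint Dplus _ hMD hBmeas hBD hnonneg
        (fun r hr => by simp only [Set.mem_setOf_eq] at hr; linarith) hvol
    · -- 0 < Δp : use B = Dplus ∩ {0 < p + n}
      set B := Dplus ∩ {r | 0 < p r + n r} with hB
      have hBmeas : MeasurableSet B :=
        hMD.inter (measurableSet_lt measurable_const (hp.add hn))
      have hpos : ∀ r ∈ B, 0 < p r - n r := by
        rintro r ⟨hr, hr2⟩
        simp only [Set.mem_setOf_eq] at hr2
        rw [hDplus] at hr
        rcases hr with hr | hr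
        · simp only [Set.mem_setOf_eq] at hr
          nlinarith [mul_nonneg hΔ0 (hn0 r)]
        · have h2 := hS hr
          simp only [Set.mem_setOf_eq] at h2
          rcases (hn0 r).lt_or_eq with hnr | hnr
          · nlinarith [mul_pos hΔpos hnr]
          · nlinarith
      have hvol : 0 < volume B := by
        by_contra h
        push_neg at h
        have h0 : volume B = 0 := le_antisymm h zero_le
        have haeB : ∀ᵐ r ∂(volume : Measure ℝ), r ∉ B := by
          rw [← measure_eq_zero_iff_ae_notMem]; exact h0
        have hPD0 : P Dplus = 0 := by
          rw [hP]
          apply my_zero p Dplus hMD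
          filter_upwards [haeB] with r hr hrD
          by_contra hc
          push_neg at hc
          exact hr ⟨hrD, by simp only [Set.mem_setOf_eq]; nlinarith [hn0 r]⟩
        have hND0 : N Dplus = 0 := by
          rw [hN]
          apply my_zero n Dplus hMD
          filter_upwards [haeB] with r hr hrD
          by_contra hc
          push_neg at hc
          exact hr ⟨hrD, by simp only [Set.mem_setOf_eq]; nlinarith [hp0 r]⟩
        have := hQ Dplus hMD
        rw [hPD0, hND0, hQDp] at this
        simp at this
        linarith [hQhat.1]
      exact my_pos _ hfint Dplus B hMD hBmeas Set.inter_subset_left hnonneg hpos hvol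
  · -- case Δp < 0 : work on the complement
    have hone_p : (∫ r, p r) = 1 := by
      have := hPA Set.univ MeasurableSet.univ
      rw [measure_univ] at this
      simpa using this.symm
    have hone_n : (∫ r, n r) = 1 := by
      have := hNA Set.univ MeasurableSet.univ
      rw [measure_univ] at this
      simpa using this.symm
    have hsplit_p := integral_add_compl hMD hPint
    have hsplit_n := integral_add_compl hMD hNint
    have hkey : (∫ r in Dplus, (p r - n r)) = ∫ r in Dplusᶜ, (n r - p r) := by
      rw [integral_sub hPint.integrableOn hNint.integrableOn,
        integral_sub hNint.integrableOn hPint.integrableOn]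
      rw [hone_p] at hsplit_p
      rw [hone_n] at hsplit_n
      linarith
    rw [hkey]
    have hCnonneg : ∀ r ∈ Dplusᶜ, 0 ≤ n r - p r := by
      intro r hr
      rw [hDplus] at hr
      have hr1 : ¬ (Δp * n r < q * (p r - n r)) := fun hc => hr (Or.inl hc)
      push_neg at hr1
      nlinarith [mul_nonpos_of_nonpos_of_nonneg hΔ0.le (hn0 r)]
    set B := Dplusᶜ ∩ {r | 0 < n r} with hB
    have hBmeas : MeasurableSet B :=
      hMD.compl.inter (measurableSet_lt measurable_const hn)
    have hpos : ∀ r ∈ B, 0 < n r - p r := by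
      rintro r ⟨hr, hr2⟩
      simp only [Set.mem_setOf_eq] at hr2
      rw [hDplus] at hr
      have hr1 : ¬ (Δp * n r < q * (p r - n r)) := fun hc => hr (Or.inl hc)
      push_neg at hr1
      nlinarith [mul_neg_of_neg_of_pos hΔ0 hr2]
    have hvol : 0 < volume B := by
      by_contra h
      push_neg at h
      have h0 : volume B = 0 := le_antisymm h zero_le
      have haeB : ∀ᵐ r ∂(volume : Measure ℝ), r ∉ B := by
        rw [← measure_eq_zero_iff_ae_notMem]; exact h0
      have hND0 : N Dplusᶜ = 0 := by
        rw [hN]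
        apply my_zero n Dplusᶜ hMD.compl
        filter_upwards [haeB] with r hr hrD
        by_contra hc
        push_neg at hc
        exact hr ⟨hrD, by simp only [Set.mem_setOf_eq]; linarith⟩
      have hPD0 : P Dplusᶜ = 0 := by
        rw [hP]
        apply my_zero p Dplusᶜ hMD.compl
        filter_upwards [haeB] with r hr hrD
        by_contra hc
        push_neg at hc
        have h1 := hCnonneg r hrD
        exact hr ⟨hrD, by simp only [Set.mem_setOf_eq]; linarith⟩
      have hQc : (Q Dplusᶜ).toReal = 1 - Qhat := by
        rw [prob_compl_eq_one_sub hMD,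
          ENNReal.toReal_sub_of_le prob_le_one (by simp), ← hQDp]
        simp
      have := hQ Dplusᶜ hMD.compl
      rw [hPD0, hND0, hQc] at this
      simp at this
      linarith [hQhat.2]
    exact my_pos _ (hNint.sub hPint) Dplusᶜ B hMD.compl hBmeas Set.inter_subset_left
      hCnonneg hpos hvol
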